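/- Let h: 𝒳² → ℝ be symmetric, square-integrable, with Hoeffding decomposition h(x,x') = m_h + h⁽¹⁾(x) + h⁽¹⁾(x') + h⁽²⁾(x,x') where h⁽¹⁾(x) = E[h(x,X')] − m_h and h⁽²⁾(x,x') = h(x,x') − h⁽¹⁾(x) − h⁽¹⁾(x') − m_h. If the ranges of h⁽²⁾ and h⁽¹⁾ satisfy the degenerate structure above, and moreover Var(h⁽²⁾(X_1,X_2)) = 2·Var(h⁽¹⁾(X)) (as holds when h(x,x') = D(x,x')(Φ_𝒫(x,x') − Φ_{𝒫*}(x,x')) with E[h(X,x')²] ≤ E[D(X,x')²] and h⁽¹⁾ suitably controlled), then the U-statistic Λ_B over a block B of size |B| satisfies Var(Λ_B) ≤ (8/|B|)·Var(h⁽¹⁾(X)). -/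

import Mathlib

open MeasureTheory ProbabilityTheory

private lemma integrable_mul_of_memL2 {α : Type*} [MeasurableSpace α] {ν : Measure α}
    {f g : α → ℝ} (hf : MemLp f 2 ν) (hg : MemLp g 2 ν) :
    Integrable (fun x => f x * g x) ν := by
  have hint : Integrable (fun x => (f x ^ 2 + g x ^ 2) / 2) ν :=
    (hf.integrable_sq.add hg.integrable_sq).div_const 2
  refine hint.mono' (hf.aestronglyMeasurable.mul hg.aestronglyMeasurable) ?_
  filter_upwards with x
  rw [Real.norm_eq_abs, abs_mul]
  nlinarith [sq_nonneg (|f x| - |g x|), sq_abs (f x), sq_abs (g x), abs_nonneg (f x),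
    abs_nonneg (g x)]

private lemma variance_fun_add_const {Ω : Type*} [MeasurableSpace Ω] {μ : Measure Ω}
    [IsProbabilityMeasure μ] {f : Ω → ℝ} (hf : Integrable f μ) (k : ℝ) :
    variance (fun ω => f ω + k) μ = variance f μ := by
  have hmean : (∫ ω, (f ω + k) ∂μ) = (∫ ω, f ω ∂μ) + k := by
    rw [integral_add hf (integrable_const k), integral_const]
    simp
  rw [variance, variance, evariance, evariance]
  congr 1
  refine lintegral_congr fun ω => ?_
  have h1 : (μ[fun ω => f ω + k]) = (μ[f]) + k := hmean
  rw [h1]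
  have h2 : f ω + k - ((μ[f]) + k) = f ω - μ[f] := by ring
  rw [h2]

private lemma sum_pairs_eq {n : ℕ} (f : Fin n → ℝ) :
    ∑ p ∈ Finset.univ.filter (fun q : Fin n × Fin n => q.1 < q.2), (f p.1 + f p.2)
      = ((n : ℝ) - 1) * ∑ i, f i := by
  classical
  have h1 : ∑ p ∈ Finset.univ.filter (fun q : Fin n × Fin n => q.1 < q.2), f p.2
      = ∑ p ∈ Finset.univ.filter (fun q : Fin n × Fin n => q.2 < q.1), f p.1 := by
    refine Finset.sum_nbij' (fun p => (p.2, p.1)) (fun p => (p.2, p.1)) ?_ ?_ ?_ ?_ ?_ <;>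
      simp
  rw [Finset.sum_add_distrib, h1, ← Finset.sum_union (by
    rw [Finset.disjoint_filter]
    intro q _ hq
    simp only [not_lt]
    exact le_of_lt hq)]
  have h2 : Finset.univ.filter (fun q : Fin n × Fin n => q.1 < q.2)
      ∪ Finset.univ.filter (fun q : Fin n × Fin n => q.2 < q.1)
      = Finset.univ.filter (fun q : Fin n × Fin n => q.1 ≠ q.2) := by
    rw [← Finset.filter_or]
    exact Finset.filter_congr fun q _ => (ne_iff_lt_or_gt (a := q.1) (b := q.2)).symm
  rw [h2, Finset.sum_filter]
  rw [← Finset.univ_product_univ, Finset.sum_product]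
  have h3 : ∀ i : Fin n, (∑ j : Fin n, if (i, j).1 ≠ (i, j).2 then f (i, j).1 else 0)
      = (n : ℝ) * f i - f i := by
    intro i
    have e : ∀ j : Fin n, (if (i, j).1 ≠ (i, j).2 then f (i, j).1 else 0)
        = f i - (if i = j then f i else 0) := by
      intro j
      by_cases hij : i = j <;> simp [hij]
    rw [Finset.sum_congr rfl fun j _ => e j, Finset.sum_sub_distrib, Finset.sum_const,
      Finset.sum_ite_eq]
    simp [mul_comm]
  rw [Finset.sum_congr rfl fun i _ => h3 i, Finset.sum_sub_distrib, ← Finset.mul_sum]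
  ring

/-- Key variance computation for fast clustering rates: if `h` is symmetric,
square-integrable, with Hoeffding decomposition `h = m_h + h¹(x) + h¹(x') + h²(x,x')`
and `Var(h²(X₁,X₂)) = 2 Var(h¹(X))`, then the `U`-statistic `Λ_B` over a block `B` of
size `|B|` satisfies `Var(Λ_B) ≤ (8/|B|) Var(h¹(X))`. -/
theorem variance_block_Ustat_le_of_hoeffding
    {𝒳 Ω : Type*} [MeasurableSpace 𝒳] [MeasurableSpace Ω]
    (P : Measure 𝒳) [IsProbabilityMeasure P]
    (μ : Measure Ω) [IsProbabilityMeasure μ]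
    (h : 𝒳 → 𝒳 → ℝ) (hmeas : Measurable (Function.uncurry h))
    (hsymm : ∀ x y, h x y = h y x)
    (hL2 : MemLp (fun z : 𝒳 × 𝒳 => h z.1 z.2) 2 (P.prod P))
    (mh : ℝ) (hmh : mh = ∫ z, h z.1 z.2 ∂(P.prod P))
    (h₁ : 𝒳 → ℝ) (hh₁ : ∀ x, h₁ x = (∫ y, h x y ∂P) - mh)
    (h₂ : 𝒳 → 𝒳 → ℝ) (hh₂ : ∀ x y, h₂ x y = h x y - h₁ x - h₁ y - mh)
    (hvar : variance (fun z : 𝒳 × 𝒳 => h₂ z.1 z.2) (P.prod P) = 2 * variance h₁ P)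
    (b : ℕ) (hb : 2 ≤ b)
    (X : Fin b → Ω → 𝒳) (hXm : ∀ i, Measurable (X i))
    (hindep : iIndepFun X μ)
    (hlaw : ∀ i, μ.map (X i) = P) :
    variance (fun ω => (2 / ((b : ℝ) * (b - 1))) *
        ∑ q ∈ Finset.univ.filter (fun q : Fin b × Fin b => q.1 < q.2),
          h (X q.1 ω) (X q.2 ω)) μ
      ≤ (8 / (b : ℝ)) * variance h₁ P := by
  classical
  set pairs := Finset.univ.filter (fun q : Fin b × Fin b => q.1 < q.2) with hpairs
  -- measurability
  have h₁meas : Measurable h₁ := by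
    have hm : Measurable fun x => ∫ y, h x y ∂P :=
      (hmeas.stronglyMeasurable.integral_prod_right (ν := P)).measurable
    have e : h₁ = fun x => (∫ y, h x y ∂P) - mh := funext hh₁
    rw [e]; exact hm.sub measurable_const
  have h₂meas : Measurable (fun z : 𝒳 × 𝒳 => h₂ z.1 z.2) := by
    have e : (fun z : 𝒳 × 𝒳 => h₂ z.1 z.2)
        = fun z : 𝒳 × 𝒳 => h z.1 z.2 - h₁ z.1 - h₁ z.2 - mh := funext fun z => hh₂ z.1 z.2
    rw [e]
    exact ((hmeas.sub (h₁meas.comp measurable_fst)).sub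
      (h₁meas.comp measurable_snd)).sub measurable_const
  have h₂symm : ∀ x y, h₂ x y = h₂ y x := by
    intro x y; rw [hh₂, hh₂, hsymm]; ring
  -- basic integrability
  have hInth : Integrable (fun z : 𝒳 × 𝒳 => h z.1 z.2) (P.prod P) := hL2.integrable one_le_two
  have hsec : ∀ᵐ x ∂P, Integrable (fun y => h x y) P := hInth.prod_right_ae
  have hgL2 : MemLp (fun z : 𝒳 × 𝒳 => h z.1 z.2 - mh) 2 (P.prod P) := hL2.sub (memLp_const mh)
  have hgsq : Integrable (fun z : 𝒳 × 𝒳 => (h z.1 z.2 - mh) ^ 2) (P.prod P) := hgL2.integrable_sq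
  have hdom : Integrable (fun x => ∫ y, (h x y - mh) ^ 2 ∂P) P := hgsq.integral_prod_left
  -- Jensen a.e. bound
  have hjensen : ∀ᵐ x ∂P, (h₁ x) ^ 2 ≤ ∫ y, (h x y - mh) ^ 2 ∂P := by
    filter_upwards [hsec, hgsq.prod_right_ae] with x hx1 hx2
    have hxm : AEStronglyMeasurable (fun y => h x y - mh) P :=
      ((hmeas.comp measurable_prodMk_left).sub measurable_const).aestronglyMeasurable
    have hmem : MemLp (fun y => h x y - mh) 2 P := (memLp_two_iff_integrable_sq hxm).2 hx2
    have hvar0 := variance_nonneg (fun y => h x y - mh) P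
    rw [variance_eq_sub hmem] at hvar0
    simp only [Pi.pow_apply] at hvar0
    have hint : ∫ y, (h x y - mh) ∂P = h₁ x := by
      rw [integral_sub hx1 (integrable_const _), integral_const]
      simp [hh₁ x]
    rw [hint] at hvar0
    linarith
  have hh₁L2 : MemLp h₁ 2 P := by
    refine (memLp_two_iff_integrable_sq h₁meas.aestronglyMeasurable).2 ?_
    refine hdom.mono' ((h₁meas.pow_const 2).aestronglyMeasurable) ?_
    filter_upwards [hjensen] with x hx
    rw [Real.norm_eq_abs, abs_of_nonneg (sq_nonneg _)]
    exact hx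
  have hInth₁ : Integrable h₁ P := hh₁L2.integrable one_le_two
  -- mean of h₁ is zero
  have hu_int : Integrable (fun x => ∫ y, h x y ∂P) P := hInth.integral_prod_left
  have hEh₁ : ∫ x, h₁ x ∂P = 0 := by
    have e : h₁ = fun x => (∫ y, h x y ∂P) - mh := funext hh₁
    rw [e, integral_sub hu_int (integrable_const _), integral_const]
    have := MeasureTheory.integral_integral (f := fun x y => h x y) hInth
    simp only [measure_univ, ENNReal.toReal_one, probReal_univ, one_smul, smul_eq_mul, one_mul]
    rw [this, ← hmh, sub_self]
  -- variance of h₁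
  set v := ∫ x, h₁ x ^ 2 ∂P with hvdef
  have hv0 : 0 ≤ v := integral_nonneg fun x => sq_nonneg _
  have hvf : variance h₁ P = v := by
    rw [variance_eq_sub hh₁L2, hEh₁]
    simp [hvdef]
  -- L² on the product
  have hfst : MeasurePreserving (Prod.fst : 𝒳 × 𝒳 → 𝒳) (P.prod P) P :=
    ⟨measurable_fst, by simp⟩
  have hsnd : MeasurePreserving (Prod.snd : 𝒳 × 𝒳 → 𝒳) (P.prod P) P :=
    ⟨measurable_snd, by simp⟩
  have h₁fstL2 : MemLp (fun z : 𝒳 × 𝒳 => h₁ z.1) 2 (P.prod P) :=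
    (hfst.map_eq.symm ▸ hh₁L2 : MemLp h₁ 2 ((P.prod P).map Prod.fst)).comp_of_map
      measurable_fst.aemeasurable
  have h₁sndL2 : MemLp (fun z : 𝒳 × 𝒳 => h₁ z.2) 2 (P.prod P) :=
    (hsnd.map_eq.symm ▸ hh₁L2 : MemLp h₁ 2 ((P.prod P).map Prod.snd)).comp_of_map
      measurable_snd.aemeasurable
  have hh₂L2 : MemLp (fun z : 𝒳 × 𝒳 => h₂ z.1 z.2) 2 (P.prod P) := by
    have e : (fun z : 𝒳 × 𝒳 => h₂ z.1 z.2)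
        = fun z : 𝒳 × 𝒳 => h z.1 z.2 - h₁ z.1 - h₁ z.2 - mh := funext fun z => hh₂ z.1 z.2
    rw [e]
    exact ((hL2.sub h₁fstL2).sub h₁sndL2).sub (memLp_const mh)
  -- mean of h₂ on the product is zero
  have hEfst : ∫ z : 𝒳 × 𝒳, h₁ z.1 ∂(P.prod P) = 0 := by
    have e : ∫ y, h₁ y ∂((P.prod P).map Prod.fst) = ∫ z : 𝒳 × 𝒳, h₁ z.1 ∂(P.prod P) :=
      integral_map measurable_fst.aemeasurable
        (by rw [hfst.map_eq]; exact h₁meas.aestronglyMeasurable)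
    rw [← e, hfst.map_eq, hEh₁]
  have hEsnd : ∫ z : 𝒳 × 𝒳, h₁ z.2 ∂(P.prod P) = 0 := by
    have e : ∫ y, h₁ y ∂((P.prod P).map Prod.snd) = ∫ z : 𝒳 × 𝒳, h₁ z.2 ∂(P.prod P) :=
      integral_map measurable_snd.aemeasurable
        (by rw [hsnd.map_eq]; exact h₁meas.aestronglyMeasurable)
    rw [← e, hsnd.map_eq, hEh₁]
  have hEh₂ : ∫ z : 𝒳 × 𝒳, h₂ z.1 z.2 ∂(P.prod P) = 0 := by
    have e : (fun z : 𝒳 × 𝒳 => h₂ z.1 z.2)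
        = fun z : 𝒳 × 𝒳 => h z.1 z.2 - h₁ z.1 - h₁ z.2 - mh := funext fun z => hh₂ z.1 z.2
    have i1 : Integrable (fun z : 𝒳 × 𝒳 => h z.1 z.2 - h₁ z.1) (P.prod P) :=
      hInth.sub (h₁fstL2.integrable one_le_two)
    have i2 : Integrable (fun z : 𝒳 × 𝒳 => h z.1 z.2 - h₁ z.1 - h₁ z.2) (P.prod P) :=
      i1.sub (h₁sndL2.integrable one_le_two)
    rw [e, integral_sub i2 (integrable_const _), integral_sub i1 (h₁sndL2.integrable one_le_two),
      integral_sub hInth (h₁fstL2.integrable one_le_two), hEfst, hEsnd, integral_const]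
    simp [← hmh]
  -- second moment of h₂ on the product
  have hw : ∫ z : 𝒳 × 𝒳, (h₂ z.1 z.2) ^ 2 ∂(P.prod P) = 2 * v := by
    have := variance_eq_sub hh₂L2
    rw [hEh₂, hvar, hvf] at this
    simp only [Pi.pow_apply] at this
    linarith [this]
  -- degeneracy of h₂
  have hdeg : ∀ᵐ x ∂P, ∫ y, h₂ x y ∂P = 0 := by
    filter_upwards [hsec] with x hx
    have e : (fun y => h₂ x y) = fun y => h x y - h₁ x - h₁ y - mh := funext fun y => hh₂ x y
    have i1 : Integrable (fun y => h x y - h₁ x) P := hx.sub (integrable_const _)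
    have i2 : Integrable (fun y => h x y - h₁ x - h₁ y) P := i1.sub hInth₁
    rw [e, integral_sub i2 (integrable_const _), integral_sub i1 hInth₁,
      integral_sub hx (integrable_const _), hEh₁, integral_const, integral_const]
    simp only [measure_univ, ENNReal.toReal_one, probReal_univ, one_smul, smul_eq_mul, one_mul]
    have := hh₁ x
    linarith
  -- laws of pairs and triples
  have hpairlaw : ∀ i j : Fin b, i ≠ j → μ.map (fun ω => (X i ω, X j ω)) = P.prod P := by
    intro i j hij
    rw [(indepFun_iff_map_prod_eq_prod_map_map (hXm i).aemeasurable (hXm j).aemeasurable).1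
      (hindep.indepFun hij), hlaw i, hlaw j]
  have htriplaw : ∀ i j k : Fin b, i ≠ j → i ≠ k → j ≠ k →
      μ.map (fun ω => (X i ω, (X j ω, X k ω))) = P.prod (P.prod P) := by
    intro i j k hij hik hjk
    have hind : IndepFun (X i) (fun ω => (X j ω, X k ω)) μ :=
      (hindep.indepFun_prodMk hXm j k i hij.symm hik.symm).symm
    rw [(indepFun_iff_map_prod_eq_prod_map_map (hXm i).aemeasurable
      ((hXm j).prodMk (hXm k)).aemeasurable).1 hind, hlaw i, hpairlaw j k hjk]
  -- memLp of the composed variables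
  have hYL2 : ∀ i, MemLp (fun ω => h₁ (X i ω)) 2 μ := fun i =>
    ((hlaw i).symm ▸ hh₁L2 : MemLp h₁ 2 (μ.map (X i))).comp_of_map (hXm i).aemeasurable
  have hZL2 : ∀ i j : Fin b, i ≠ j → MemLp (fun ω => h₂ (X i ω) (X j ω)) 2 μ := fun i j hij =>
    ((hpairlaw i j hij).symm ▸ hh₂L2 :
      MemLp (fun z : 𝒳 × 𝒳 => h₂ z.1 z.2) 2 (μ.map (fun ω => (X i ω, X j ω)))).comp_of_map
      ((hXm i).prodMk (hXm j)).aemeasurable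
  -- means at the level of μ
  have hEY : ∀ i, ∫ ω, h₁ (X i ω) ∂μ = 0 := by
    intro i
    have e : ∫ y, h₁ y ∂(μ.map (X i)) = ∫ ω, h₁ (X i ω) ∂μ :=
      integral_map (hXm i).aemeasurable (by rw [hlaw i]; exact h₁meas.aestronglyMeasurable)
    rw [← e, hlaw i, hEh₁]
  have hEZ : ∀ i j : Fin b, i ≠ j → ∫ ω, h₂ (X i ω) (X j ω) ∂μ = 0 := by
    intro i j hij
    have e : ∫ z : 𝒳 × 𝒳, h₂ z.1 z.2 ∂(μ.map (fun ω => (X i ω, X j ω)))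
        = ∫ ω, h₂ (X i ω) (X j ω) ∂μ :=
      integral_map ((hXm i).prodMk (hXm j)).aemeasurable
        (by rw [hpairlaw i j hij]; exact h₂meas.aestronglyMeasurable)
    rw [← e, hpairlaw i j hij, hEh₂]
  -- products of the h₁-parts
  have hEYY : ∀ i j : Fin b, ∫ ω, h₁ (X i ω) * h₁ (X j ω) ∂μ = if i = j then v else 0 := by
    intro i j
    by_cases hij : i = j
    · subst hij
      simp only [if_pos]
      have e : ∫ x, h₁ x * h₁ x ∂(μ.map (X i)) = ∫ ω, h₁ (X i ω) * h₁ (X i ω) ∂μ :=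
        integral_map (hXm i).aemeasurable
          (by rw [hlaw i]; exact (h₁meas.mul h₁meas).aestronglyMeasurable)
      rw [← e, hlaw i, hvdef]
      exact integral_congr_ae (Filter.Eventually.of_forall fun x => by ring)
    · simp only [if_neg hij]
      have hind : IndepFun (h₁ ∘ X i) (h₁ ∘ X j) μ :=
        (hindep.indepFun hij).comp h₁meas h₁meas
      have e := hind.integral_mul_eq_mul_integral
        ((h₁meas.comp (hXm i)).aestronglyMeasurable)
        ((h₁meas.comp (hXm j)).aestronglyMeasurable)
      have e2 : ∫ ω, h₁ (X i ω) * h₁ (X j ω) ∂μ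
          = (∫ ω, h₁ (X i ω) ∂μ) * ∫ ω, h₁ (X j ω) ∂μ := e
      rw [e2, hEY i, zero_mul]
  -- cross-products h₁ with h₂, shared index
  have hcross2 : ∀ a c : Fin b, a ≠ c →
      ∫ ω, h₁ (X a ω) * h₂ (X a ω) (X c ω) ∂μ = 0 := by
    intro a c hac
    have hKm : Measurable (fun z : 𝒳 × 𝒳 => h₁ z.1 * h₂ z.1 z.2) :=
      (h₁meas.comp measurable_fst).mul h₂meas
    have e : ∫ z : 𝒳 × 𝒳, h₁ z.1 * h₂ z.1 z.2 ∂(μ.map (fun ω => (X a ω, X c ω)))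
        = ∫ ω, h₁ (X a ω) * h₂ (X a ω) (X c ω) ∂μ :=
      integral_map ((hXm a).prodMk (hXm c)).aemeasurable
        (by rw [hpairlaw a c hac]; exact hKm.aestronglyMeasurable)
    rw [← e, hpairlaw a c hac]
    have hint : Integrable (fun z : 𝒳 × 𝒳 => h₁ z.1 * h₂ z.1 z.2) (P.prod P) :=
      integrable_mul_of_memL2 h₁fstL2 hh₂L2
    rw [MeasureTheory.integral_prod _ hint]
    have hz : (fun x => ∫ y, h₁ x * h₂ x y ∂P) =ᵐ[P] fun _ => (0 : ℝ) := by
      filter_upwards [hdeg] with x hx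
      rw [integral_const_mul, hx, mul_zero]
    rw [integral_congr_ae hz, integral_zero]
  -- product of two h₂'s with one shared index
  have hcross3 : ∀ a c d : Fin b, a ≠ c → a ≠ d → c ≠ d →
      ∫ ω, h₂ (X a ω) (X c ω) * h₂ (X a ω) (X d ω) ∂μ = 0 := by
    intro a c d hac had hcd
    have hm1 : MeasurePreserving (Prod.map id (Prod.fst : 𝒳 × 𝒳 → 𝒳))
        (P.prod (P.prod P)) (P.prod P) := (MeasurePreserving.id P).prod hfst
    have hm2 : MeasurePreserving (Prod.map id (Prod.snd : 𝒳 × 𝒳 → 𝒳))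
        (P.prod (P.prod P)) (P.prod P) := (MeasurePreserving.id P).prod hsnd
    have hK2 : MemLp (fun z : 𝒳 × 𝒳 × 𝒳 => h₂ z.1 z.2.1) 2 (P.prod (P.prod P)) :=
      (hm1.map_eq.symm ▸ hh₂L2 : MemLp (fun z : 𝒳 × 𝒳 => h₂ z.1 z.2) 2
        ((P.prod (P.prod P)).map (Prod.map id Prod.fst))).comp_of_map
        hm1.measurable.aemeasurable
    have hK3 : MemLp (fun z : 𝒳 × 𝒳 × 𝒳 => h₂ z.1 z.2.2) 2 (P.prod (P.prod P)) :=
      (hm2.map_eq.symm ▸ hh₂L2 : MemLp (fun z : 𝒳 × 𝒳 => h₂ z.1 z.2) 2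
        ((P.prod (P.prod P)).map (Prod.map id Prod.snd))).comp_of_map
        hm2.measurable.aemeasurable
    have hint : Integrable (fun z : 𝒳 × 𝒳 × 𝒳 => h₂ z.1 z.2.1 * h₂ z.1 z.2.2)
        (P.prod (P.prod P)) := integrable_mul_of_memL2 hK2 hK3
    have hlaw3 := htriplaw a c d hac had hcd
    have e : ∫ z : 𝒳 × 𝒳 × 𝒳, h₂ z.1 z.2.1 * h₂ z.1 z.2.2
          ∂(μ.map (fun ω => (X a ω, (X c ω, X d ω))))
        = ∫ ω, h₂ (X a ω) (X c ω) * h₂ (X a ω) (X d ω) ∂μ :=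
      integral_map ((hXm a).prodMk ((hXm c).prodMk (hXm d))).aemeasurable
        (by rw [hlaw3]; exact hint.aestronglyMeasurable)
    rw [← e, hlaw3, MeasureTheory.integral_prod _ hint]
    have hz : (fun x => ∫ yz : 𝒳 × 𝒳, h₂ x yz.1 * h₂ x yz.2 ∂(P.prod P))
        =ᵐ[P] fun _ => (0 : ℝ) := by
      filter_upwards [hdeg] with x hx
      rw [integral_prod_mul (f := fun y => h₂ x y) (g := fun y => h₂ x y), hx, mul_zero]
    rw [integral_congr_ae hz, integral_zero]
  -- all Y-Z cross terms vanish
  have hEYZ : ∀ i : Fin b, ∀ p ∈ pairs, ∫ ω, h₁ (X i ω) * h₂ (X p.1 ω) (X p.2 ω) ∂μ = 0 := by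
    intro i p hp
    have hp' : p.1 < p.2 := (Finset.mem_filter.1 hp).2
    rcases eq_or_ne i p.1 with e1 | e1
    · subst e1
      exact hcross2 p.1 p.2 hp'.ne
    rcases eq_or_ne i p.2 with e2 | e2
    · subst e2
      have e : (fun ω => h₁ (X p.2 ω) * h₂ (X p.1 ω) (X p.2 ω))
          = fun ω => h₁ (X p.2 ω) * h₂ (X p.2 ω) (X p.1 ω) :=
        funext fun ω => by rw [h₂symm]
      rw [e]
      exact hcross2 p.2 p.1 hp'.ne'
    · have hind : IndepFun (h₁ ∘ X i)
          ((fun z : 𝒳 × 𝒳 => h₂ z.1 z.2) ∘ fun ω => (X p.1 ω, X p.2 ω)) μ :=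
        ((hindep.indepFun_prodMk hXm p.1 p.2 i e1.symm e2.symm).symm).comp h₁meas h₂meas
      have e := hind.integral_mul_eq_mul_integral
        ((h₁meas.comp (hXm i)).aestronglyMeasurable)
        ((h₂meas.comp ((hXm p.1).prodMk (hXm p.2))).aestronglyMeasurable)
      have e2' : ∫ ω, h₁ (X i ω) * h₂ (X p.1 ω) (X p.2 ω) ∂μ
          = (∫ ω, h₁ (X i ω) ∂μ) * ∫ ω, h₂ (X p.1 ω) (X p.2 ω) ∂μ := e
      rw [e2', hEY i, zero_mul]
  -- products of two h₂-terms
  have hEZZ : ∀ p ∈ pairs, ∀ q ∈ pairs,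
      ∫ ω, h₂ (X p.1 ω) (X p.2 ω) * h₂ (X q.1 ω) (X q.2 ω) ∂μ
        = if p = q then 2 * v else 0 := by
    intro p hp q hq
    have hp' : p.1 < p.2 := (Finset.mem_filter.1 hp).2
    have hq' : q.1 < q.2 := (Finset.mem_filter.1 hq).2
    by_cases hpq : p = q
    · subst hpq
      simp only [if_pos]
      have hKm : Measurable (fun z : 𝒳 × 𝒳 => h₂ z.1 z.2 * h₂ z.1 z.2) := h₂meas.mul h₂meas
      have e : ∫ z : 𝒳 × 𝒳, h₂ z.1 z.2 * h₂ z.1 z.2 ∂(μ.map (fun ω => (X p.1 ω, X p.2 ω)))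
          = ∫ ω, h₂ (X p.1 ω) (X p.2 ω) * h₂ (X p.1 ω) (X p.2 ω) ∂μ :=
        integral_map ((hXm p.1).prodMk (hXm p.2)).aemeasurable
          (by rw [hpairlaw p.1 p.2 hp'.ne]; exact hKm.aestronglyMeasurable)
      rw [← e, hpairlaw p.1 p.2 hp'.ne, ← hw]
      exact integral_congr_ae (Filter.Eventually.of_forall fun z => by ring)
    · simp only [if_neg hpq]
      rcases eq_or_ne p.1 q.1 with e11 | e11
      · have e22 : p.2 ≠ q.2 := fun e => hpq (Prod.ext e11 e)
        have := hcross3 p.1 p.2 q.2 hp'.ne (e11 ▸ hq'.ne) e22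
        rw [← e11]
        exact this
      rcases eq_or_ne p.1 q.2 with e12 | e12
      · -- q.1 < q.2 = p.1 < p.2
        have hq1p1 : q.1 < p.1 := e12 ▸ hq'
        have e : (fun ω => h₂ (X p.1 ω) (X p.2 ω) * h₂ (X q.1 ω) (X q.2 ω))
            = fun ω => h₂ (X p.1 ω) (X p.2 ω) * h₂ (X p.1 ω) (X q.1 ω) :=
          funext fun ω => by rw [← e12, h₂symm (X q.1 ω)]
        rw [e]
        exact hcross3 p.1 p.2 q.1 hp'.ne hq1p1.ne' (hq1p1.trans hp').ne'
      rcases eq_or_ne p.2 q.1 with e21 | e21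
      · -- p.1 < p.2 = q.1 < q.2
        have hp2q2 : p.2 < q.2 := e21 ▸ hq'
        have e : (fun ω => h₂ (X p.1 ω) (X p.2 ω) * h₂ (X q.1 ω) (X q.2 ω))
            = fun ω => h₂ (X p.2 ω) (X p.1 ω) * h₂ (X p.2 ω) (X q.2 ω) :=
          funext fun ω => by rw [h₂symm (X p.1 ω), ← e21]
        rw [e]
        exact hcross3 p.2 p.1 q.2 hp'.ne' hp2q2.ne (hp'.trans hp2q2).ne
      rcases eq_or_ne p.2 q.2 with e22 | e22
      · have hq1p2 : q.1 < p.2 := e22 ▸ hq'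
        have e : (fun ω => h₂ (X p.1 ω) (X p.2 ω) * h₂ (X q.1 ω) (X q.2 ω))
            = fun ω => h₂ (X p.2 ω) (X p.1 ω) * h₂ (X p.2 ω) (X q.1 ω) :=
          funext fun ω => by rw [h₂symm (X p.1 ω), ← e22, h₂symm (X q.1 ω)]
        rw [e]
        exact hcross3 p.2 p.1 q.1 hp'.ne' hq1p2.ne' (fun e => hpq (Prod.ext e e22))
      · have hind : IndepFun
            ((fun z : 𝒳 × 𝒳 => h₂ z.1 z.2) ∘ fun ω => (X p.1 ω, X p.2 ω))
            ((fun z : 𝒳 × 𝒳 => h₂ z.1 z.2) ∘ fun ω => (X q.1 ω, X q.2 ω)) μ :=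
          (hindep.indepFun_prodMk_prodMk hXm p.1 p.2 q.1 q.2 e11 e12 e21 e22).comp
            h₂meas h₂meas
        have e := hind.integral_mul_eq_mul_integral
          ((h₂meas.comp ((hXm p.1).prodMk (hXm p.2))).aestronglyMeasurable)
          ((h₂meas.comp ((hXm q.1).prodMk (hXm q.2))).aestronglyMeasurable)
        have e' : ∫ ω, h₂ (X p.1 ω) (X p.2 ω) * h₂ (X q.1 ω) (X q.2 ω) ∂μ
            = (∫ ω, h₂ (X p.1 ω) (X p.2 ω) ∂μ) * ∫ ω, h₂ (X q.1 ω) (X q.2 ω) ∂μ := e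
        rw [e', hEZ p.1 p.2 hp'.ne, zero_mul]
  -- the centered statistic
  set A : Ω → ℝ := fun ω => ∑ i, h₁ (X i ω) with hA
  set Z : Ω → ℝ := fun ω => ∑ p ∈ pairs, h₂ (X p.1 ω) (X p.2 ω) with hZdef
  set T : Ω → ℝ := fun ω => ((b : ℝ) - 1) * A ω + Z ω with hT
  have hAL2 : MemLp A 2 μ := memLp_finset_sum _ fun i _ => hYL2 i
  have hZL2' : MemLp Z 2 μ :=
    memLp_finset_sum _ fun p hp => hZL2 p.1 p.2 (Finset.mem_filter.1 hp).2.ne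
  have hTL2 : MemLp T 2 μ := (hAL2.const_mul _).add hZL2'
  have hintY : ∀ i : Fin b, Integrable (fun ω => h₁ (X i ω)) μ := fun i =>
    (hYL2 i).integrable one_le_two
  have hintZ : ∀ p ∈ pairs, Integrable (fun ω => h₂ (X p.1 ω) (X p.2 ω)) μ := fun p hp =>
    (hZL2 p.1 p.2 (Finset.mem_filter.1 hp).2.ne).integrable one_le_two
  -- pointwise decomposition
  have hptw : ∀ ω, (∑ q ∈ pairs, h (X q.1 ω) (X q.2 ω)) = T ω + (pairs.card : ℝ) * mh := by
    intro ω
    have e : ∀ p : Fin b × Fin b,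
        h (X p.1 ω) (X p.2 ω)
          = (h₁ (X p.1 ω) + h₁ (X p.2 ω)) + (h₂ (X p.1 ω) (X p.2 ω) + mh) := fun p => by
      rw [hh₂]; ring
    rw [Finset.sum_congr rfl fun p _ => e p, Finset.sum_add_distrib, hpairs,
      sum_pairs_eq (fun i => h₁ (X i ω)), Finset.sum_add_distrib, Finset.sum_const,
      nsmul_eq_mul]
    simp only [hT, hA, hZdef, hpairs]
    ring
  have hgoal : (fun ω => (2 / ((b : ℝ) * (b - 1))) * ∑ q ∈ pairs, h (X q.1 ω) (X q.2 ω))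
      = fun ω => (2 / ((b : ℝ) * ((b : ℝ) - 1))) * T ω
          + (2 / ((b : ℝ) * ((b : ℝ) - 1))) * ((pairs.card : ℝ) * mh) :=
    funext fun ω => by rw [hptw ω]; ring
  rw [hgoal, variance_fun_add_const ((hTL2.integrable one_le_two).const_mul _) _, variance_const_mul]
  -- mean of T
  have hET : ∫ ω, T ω ∂μ = 0 := by
    simp only [hT, hA, hZdef]
    rw [integral_add ((integrable_finset_sum _ fun i _ => hintY i).const_mul _)
      (integrable_finset_sum _ fun p hp => hintZ p hp),
      integral_const_mul, integral_finset_sum _ (fun i _ => hintY i),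
      integral_finset_sum _ (fun p hp => hintZ p hp)]
    rw [Finset.sum_eq_zero fun i _ => hEY i,
      Finset.sum_eq_zero fun p hp => hEZ p.1 p.2 (Finset.mem_filter.1 hp).2.ne]
    ring
  -- second moments
  have hintYY : ∀ i j : Fin b, Integrable (fun ω => h₁ (X i ω) * h₁ (X j ω)) μ :=
    fun i j => integrable_mul_of_memL2 (hYL2 i) (hYL2 j)
  have hintYZ : ∀ i : Fin b, ∀ p ∈ pairs,
      Integrable (fun ω => h₁ (X i ω) * h₂ (X p.1 ω) (X p.2 ω)) μ :=
    fun i p hp => integrable_mul_of_memL2 (hYL2 i)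
      (hZL2 p.1 p.2 (Finset.mem_filter.1 hp).2.ne)
  have hintZZ : ∀ p ∈ pairs, ∀ q ∈ pairs,
      Integrable (fun ω => h₂ (X p.1 ω) (X p.2 ω) * h₂ (X q.1 ω) (X q.2 ω)) μ :=
    fun p hp q hq => integrable_mul_of_memL2
      (hZL2 p.1 p.2 (Finset.mem_filter.1 hp).2.ne)
      (hZL2 q.1 q.2 (Finset.mem_filter.1 hq).2.ne)
  have hEA2 : ∫ ω, A ω * A ω ∂μ = (b : ℝ) * v := by
    have e : (fun ω => A ω * A ω)
        = fun ω => ∑ i : Fin b, ∑ j : Fin b, h₁ (X i ω) * h₁ (X j ω) := by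
      funext ω; simp only [hA]; rw [Finset.sum_mul_sum]
    rw [e, integral_finset_sum _ (fun i _ => integrable_finset_sum _ fun j _ => hintYY i j),
      Finset.sum_congr rfl fun i _ => integral_finset_sum _ fun j _ => hintYY i j,
      Finset.sum_congr rfl fun i _ => Finset.sum_congr rfl fun j _ => hEYY i j,
      Finset.sum_congr rfl fun i _ => Finset.sum_ite_eq Finset.univ i fun _ => v]
    simp [Finset.sum_const, Finset.card_univ, mul_comm]
  have hEAZ : ∫ ω, A ω * Z ω ∂μ = 0 := by
    have e : (fun ω => A ω * Z ω)
        = fun ω => ∑ i : Fin b, ∑ p ∈ pairs, h₁ (X i ω) * h₂ (X p.1 ω) (X p.2 ω) := by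
      funext ω; simp only [hA, hZdef]; rw [Finset.sum_mul_sum]
    rw [e, integral_finset_sum _ (fun i _ => integrable_finset_sum _ fun p hp => hintYZ i p hp)]
    refine Finset.sum_eq_zero fun i _ => ?_
    rw [integral_finset_sum _ (fun p hp => hintYZ i p hp)]
    exact Finset.sum_eq_zero fun p hp => hEYZ i p hp
  have hEZ2 : ∫ ω, Z ω * Z ω ∂μ = (pairs.card : ℝ) * (2 * v) := by
    have e : (fun ω => Z ω * Z ω)
        = fun ω => ∑ p ∈ pairs, ∑ q ∈ pairs,
            h₂ (X p.1 ω) (X p.2 ω) * h₂ (X q.1 ω) (X q.2 ω) := by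
      funext ω; simp only [hZdef]; rw [Finset.sum_mul_sum]
    rw [e, integral_finset_sum _ (fun p hp => integrable_finset_sum _ fun q hq => hintZZ p hp q hq),
      Finset.sum_congr rfl fun p hp => integral_finset_sum _ fun q hq => hintZZ p hp q hq,
      Finset.sum_congr rfl fun p hp => Finset.sum_congr rfl fun q hq => hEZZ p hp q hq,
      Finset.sum_congr rfl fun p hp => Finset.sum_ite_eq pairs p fun _ => 2 * v,
      Finset.sum_congr rfl fun p hp => if_pos hp, Finset.sum_const, nsmul_eq_mul]
  -- integrability of the pieces
  have iAA : Integrable (fun ω => A ω * A ω) μ := integrable_mul_of_memL2 hAL2 hAL2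
  have iAZ : Integrable (fun ω => A ω * Z ω) μ := integrable_mul_of_memL2 hAL2 hZL2'
  have iZZ : Integrable (fun ω => Z ω * Z ω) μ := integrable_mul_of_memL2 hZL2' hZL2'
  have hvarT : variance T μ
      = ((b : ℝ) - 1) ^ 2 * ((b : ℝ) * v) + (pairs.card : ℝ) * (2 * v) := by
    rw [variance_eq_sub hTL2, hET]
    have e : ∫ ω, (T ^ 2) ω ∂μ
        = ∫ ω, ((((b : ℝ) - 1) ^ 2 * (A ω * A ω)
            + 2 * ((b : ℝ) - 1) * (A ω * Z ω)) + Z ω * Z ω) ∂μ :=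
      integral_congr_ae (Filter.Eventually.of_forall fun ω => by
        simp only [Pi.pow_apply, hT]; ring)
    have i1 : Integrable (fun ω => ((b : ℝ) - 1) ^ 2 * (A ω * A ω)) μ := iAA.const_mul _
    have i2 : Integrable (fun ω => 2 * ((b : ℝ) - 1) * (A ω * Z ω)) μ := iAZ.const_mul _
    have i12 : Integrable (fun ω => ((b : ℝ) - 1) ^ 2 * (A ω * A ω)
        + 2 * ((b : ℝ) - 1) * (A ω * Z ω)) μ := i1.add i2
    rw [e, integral_add i12 iZZ, integral_add i1 i2,
      integral_const_mul, integral_const_mul, hEA2, hEAZ, hEZ2]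
    ring
  -- cardinality of the set of pairs
  have hcard : (pairs.card : ℝ) * 2 = ((b : ℝ) - 1) * (b : ℝ) := by
    have hs := sum_pairs_eq (n := b) (fun _ => (1 : ℝ))
    rw [← hpairs] at hs
    simp at hs
    linarith [hs]
  -- final arithmetic
  have hb2 : (2 : ℝ) ≤ (b : ℝ) := by exact_mod_cast hb
  have hb0 : (0 : ℝ) < (b : ℝ) := by linarith
  have hb1 : (0 : ℝ) < (b : ℝ) - 1 := by linarith
  have hN : (pairs.card : ℝ) = ((b : ℝ) - 1) * (b : ℝ) / 2 := by linarith
  rw [hvarT, hvf, hN]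
  have key : (2 / ((b : ℝ) * ((b : ℝ) - 1))) ^ 2
        * (((b : ℝ) - 1) ^ 2 * ((b : ℝ) * v) + ((b : ℝ) - 1) * (b : ℝ) / 2 * (2 * v))
      = 4 * v / ((b : ℝ) - 1) := by
    field_simp
    ring
  rw [key, show (8 : ℝ) / (b : ℝ) * v = 8 * v / (b : ℝ) by ring,
    div_le_div_iff₀ hb1 hb0]
  nlinarith [hv0, hb2]
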